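/- Let m ∈ ℝ, σ > 0, r > 0, x > 0, S > 0 and set q := √(m² + 2rσ²). Then ∫_0^S e^{−ru}·(1 − π(u,x)) du = (1/r)·[1 − e^{−rS}·(1 − π(S,x))] − (1/r)·[ exp(−x(m+q)/σ²)·(1 − Φ((x − qS)/(σ√S))) + exp(−x(m−q)/σ²)·(1 − Φ((x + qS)/(σ√S))) ]. -/

import Mathlib

open MeasureTheory Real Set

/-- The standard normal density. -/
noncomputable def phi (x : ℝ) : ℝ := (Real.sqrt (2 * Real.pi))⁻¹ * Real.exp (-x ^ 2 / 2)

/-- The standard normal cumulative distribution function. -/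
noncomputable def Phi (x : ℝ) : ℝ := ∫ u in Set.Iio x, phi u

/-- The first-passage probability `π(t,x)`. -/
noncomputable def piF (m σ t x : ℝ) : ℝ :=
  1 - Phi ((x + m * t) / (σ * Real.sqrt t)) +
    Real.exp (-2 * m * x / σ ^ 2) * Phi ((-x + m * t) / (σ * Real.sqrt t))

open Filter Topology

lemma phi_nonneg (x : ℝ) : 0 ≤ phi x := by
  unfold phi
  positivity

lemma phi_continuous : Continuous phi := by
  unfold phi
  continuity

lemma phi_integrable : Integrable phi := by
  unfold phi
  apply Integrable.const_mul
  have : (fun x : ℝ => Real.exp (-x ^ 2 / 2)) = fun x : ℝ => Real.exp (-(2⁻¹) * x ^ 2) := by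
    ext x; ring_nf
  rw [this]
  exact integrable_exp_neg_mul_sq (by norm_num)

lemma phi_integral : ∫ x, phi x = 1 := by
  unfold phi
  rw [integral_const_mul]
  have : (fun x : ℝ => Real.exp (-x ^ 2 / 2)) = fun x : ℝ => Real.exp (-(2⁻¹) * x ^ 2) := by
    ext x; ring_nf
  rw [this, integral_gaussian]
  rw [show (Real.pi / 2⁻¹) = 2 * Real.pi by ring]
  rw [inv_mul_cancel₀]
  positivity

lemma Phi_nonneg (x : ℝ) : 0 ≤ Phi x :=
  setIntegral_nonneg measurableSet_Iio fun y _ => phi_nonneg y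

lemma Phi_le_one (x : ℝ) : Phi x ≤ 1 := by
  rw [← phi_integral]
  exact setIntegral_le_integral phi_integrable (Filter.Eventually.of_forall phi_nonneg)

lemma Phi_hasDerivAt (x : ℝ) : HasDerivAt Phi (phi x) x := by
  have h0 : ∀ y : ℝ, Phi y = Phi 0 + ∫ u in (0:ℝ)..y, phi u := by
    intro y
    have : Phi y - Phi 0 = ∫ u in (0:ℝ)..y, phi u := by
      unfold Phi
      rw [← intervalIntegral.integral_Iic_sub_Iic (phi_integrable.integrableOn)
        (phi_integrable.integrableOn)]
      congr 1 <;>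
        · exact setIntegral_congr_set Iio_ae_eq_Iic
    linarith
  have : HasDerivAt (fun y => Phi 0 + ∫ u in (0:ℝ)..y, phi u) (phi x) x := by
    apply HasDerivAt.const_add
    exact intervalIntegral.integral_hasDerivAt_right
      (phi_integrable.intervalIntegrable)
      (phi_continuous.aestronglyMeasurable.stronglyMeasurableAtFilter)
      phi_continuous.continuousAt
  exact this.congr_of_eventuallyEq (Filter.Eventually.of_forall h0)

lemma Phi_continuous : Continuous Phi :=
  continuous_iff_continuousAt.2 fun x => (Phi_hasDerivAt x).continuousAt

lemma Phi_tendsto_atTop : Tendsto Phi atTop (nhds 1) := by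
  have h := tendsto_setIntegral_of_monotone (μ := volume) (f := phi)
    (s := fun y : ℝ => Iio y) (fun i => measurableSet_Iio)
    (fun a b hab => Iio_subset_Iio hab) ?_
  · rw [Set.iUnion_Iio] at h
    exact (show Tendsto (fun i => ∫ x in Iio i, phi x) atTop (𝓝 1) by simpa [phi_integral] using h)
  · rw [Set.iUnion_Iio]
    exact phi_integrable.integrableOn

lemma Phi_tendsto_atBot : Tendsto Phi atBot (nhds 0) := by
  have h := tendsto_setIntegral_of_antitone (μ := volume) (f := phi)
    (s := fun y : ℝ => Iio (-y)) (fun i => measurableSet_Iio)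
    (fun a b hab => Iio_subset_Iio (by linarith)) ⟨0, phi_integrable.integrableOn⟩
  have hi : (⋂ y : ℝ, Iio (-y)) = ∅ := by
    ext z
    simp only [mem_iInter, mem_Iio, mem_empty_iff_false, iff_false, not_forall, not_lt]
    exact ⟨-z, by linarith⟩
  rw [hi] at h
  simp only [MeasureTheory.setIntegral_empty] at h
  have hneg : Tendsto (fun y : ℝ => -y) atBot atTop := tendsto_neg_atBot_atTop
  have := h.comp hneg
  have heq : Phi = (fun i : ℝ => ∫ (x : ℝ) in Iio (-i), phi x) ∘ fun y : ℝ => -y := by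
    ext z; simp [Phi, Function.comp]
  rw [heq]; exact this

lemma ratio_hasDerivAt (σ c d : ℝ) (hσ : 0 < σ) {u : ℝ} (hu : 0 < u) :
    HasDerivAt (fun u => (c + d * u) / (σ * Real.sqrt u))
      ((d * u - c) / (2 * σ * u * Real.sqrt u)) u := by
  have hs : Real.sqrt u * Real.sqrt u = u := Real.mul_self_sqrt hu.le
  have hs0 : Real.sqrt u ≠ 0 := by positivity
  have num : HasDerivAt (fun u : ℝ => c + d * u) d u := by
    simpa using (hasDerivAt_id u).const_mul d |>.const_add c
  have den : HasDerivAt (fun u : ℝ => σ * Real.sqrt u) (σ * (1 / (2 * Real.sqrt u))) u :=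
    (Real.hasDerivAt_sqrt hu.ne').const_mul σ
  have h := num.div den (by positivity)
  refine h.congr_deriv ?_
  symm
  field_simp
  ring_nf
  rw [show Real.sqrt u ^ 2 = u from Real.sq_sqrt hu.le]
  ring

lemma K1 (m σ x : ℝ) (hσ : 0 < σ) {u : ℝ} (hu : 0 < u) :
    Real.exp (-2 * m * x / σ ^ 2) * phi ((-x + m * u) / (σ * Real.sqrt u))
      = phi ((x + m * u) / (σ * Real.sqrt u)) := by
  have hs : Real.sqrt u * Real.sqrt u = u := Real.mul_self_sqrt hu.le
  have hs0 : Real.sqrt u ≠ 0 := by positivity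
  unfold phi
  rw [mul_left_comm, ← Real.exp_add]
  congr 2
  set s := Real.sqrt u with hsdef
  field_simp
  rw [← hs]
  ring

lemma K23 (m σ r x q e : ℝ) (hσ : 0 < σ) (hq2 : q ^ 2 = m ^ 2 + 2 * r * σ ^ 2)
    (he : e = q ∨ e = -q) {u : ℝ} (hu : 0 < u) :
    Real.exp (-x * (m + e) / σ ^ 2) * phi ((x - e * u) / (σ * Real.sqrt u))
      = Real.exp (-r * u) * phi ((x + m * u) / (σ * Real.sqrt u)) := by
  have hs : Real.sqrt u * Real.sqrt u = u := Real.mul_self_sqrt hu.le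
  have hs0 : Real.sqrt u ≠ 0 := by positivity
  have he2 : e ^ 2 = m ^ 2 + 2 * r * σ ^ 2 := by
    rcases he with h | h <;> rw [h] <;> simpa using hq2
  unfold phi
  rw [mul_left_comm, ← Real.exp_add, mul_left_comm, ← Real.exp_add]
  congr 2
  set s := Real.sqrt u with hsdef
  field_simp
  rw [← hs]
  linear_combination (-s^4) * he2

lemma PhiComp (σ c d : ℝ) (hσ : 0 < σ) {u : ℝ} (hu : 0 < u) :
    HasDerivAt (fun u => Phi ((c + d * u) / (σ * Real.sqrt u)))
      (phi ((c + d * u) / (σ * Real.sqrt u)) * ((d * u - c) / (2 * σ * u * Real.sqrt u))) u :=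
  (Phi_hasDerivAt _).comp u (ratio_hasDerivAt σ c d hσ hu)

lemma H_hasDerivAt (m σ r x q : ℝ) (hσ : 0 < σ) (hr : 0 < r)
    (hq2 : q ^ 2 = m ^ 2 + 2 * r * σ ^ 2) {u : ℝ} (hu : 0 < u) :
    HasDerivAt (fun u => (1 / r) * (1 - Real.exp (-r * u) * (1 - piF m σ u x))
      - (1 / r) *
        (Real.exp (-x * (m + q) / σ ^ 2) * (1 - Phi ((x - q * u) / (σ * Real.sqrt u)))
          + Real.exp (-x * (m - q) / σ ^ 2) * (1 - Phi ((x + q * u) / (σ * Real.sqrt u)))))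
      (Real.exp (-r * u) * (1 - piF m σ u x)) u := by
  have hs : Real.sqrt u * Real.sqrt u = u := Real.mul_self_sqrt hu.le
  have hs0 : Real.sqrt u ≠ 0 := by positivity
  have hE : HasDerivAt (fun u : ℝ => Real.exp (-r * u)) (Real.exp (-r * u) * (-r * 1)) u :=
    ((hasDerivAt_id u).const_mul (-r)).exp
  have hA := PhiComp σ x m hσ hu
  have hB := PhiComp σ (-x) m hσ hu
  have hα := PhiComp σ x (-q) hσ hu
  have hβ := PhiComp σ x q hσ hu
  simp only [piF]
  simp only [show ∀ v : ℝ, x - q * v = x + -q * v from fun v => by ring]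
  have hπ := ((hasDerivAt_const u (1:ℝ)).sub hA).add
    (hB.const_mul (Real.exp (-2 * m * x / σ ^ 2)))
  have h1 := (((hasDerivAt_const u (1:ℝ)).sub
      (hE.mul ((hasDerivAt_const u (1:ℝ)).sub hπ))).const_mul (1 / r))
  have h2 := ((((hasDerivAt_const u (1:ℝ)).sub hα).const_mul
      (Real.exp (-x * (m + q) / σ ^ 2))).add
    (((hasDerivAt_const u (1:ℝ)).sub hβ).const_mul
      (Real.exp (-x * (m - q) / σ ^ 2)))).const_mul (1 / r)
  have htot := h1.sub h2
  refine htot.congr_deriv ?_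
  symm
  have K1' := K1 m σ x hσ hu
  have K2' := K23 m σ r x q q hσ hq2 (Or.inl rfl) hu
  have K3' := K23 m σ r x q (-q) hσ hq2 (Or.inr rfl) hu
  simp only [show ∀ v : ℝ, x - q * v = x + -q * v from fun v => by ring,
    show m + -q = m - q from by ring] at K2' K3'
  rw [show x - -q * u = x + q * u by ring] at K3'
  simp only [Pi.sub_apply, Pi.add_apply]
  linear_combination
    (-(1/r) * Real.exp (-r*u) * (m*u + x) / (2*σ*u*Real.sqrt u)) * K1'
    + ((1/r) * (q*u + x) / (2*σ*u*Real.sqrt u)) * K2'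
    - ((1/r) * (q*u - x) / (2*σ*u*Real.sqrt u)) * K3'
    - (Real.exp (-r*u) * (1 - (1 - Phi ((x + m * u) / (σ * Real.sqrt u))
        + Real.exp (-2 * m * x / σ ^ 2) * Phi ((-x + m * u) / (σ * Real.sqrt u))))) * (mul_inv_cancel₀ hr.ne')

lemma tendsto_ratio_aux (σ : ℝ) (hσ : 0 < σ) :
    Tendsto (fun u : ℝ => (σ * Real.sqrt u)⁻¹) (𝓝[>] 0) atTop := by
  apply tendsto_inv_nhdsGT_zero.comp
  rw [tendsto_nhdsWithin_iff]
  constructor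
  · have h : ContinuousAt (fun u : ℝ => σ * Real.sqrt u) 0 :=
      (Real.continuous_sqrt.continuousAt).const_mul σ
    have := h.tendsto.mono_left (nhdsWithin_le_nhds (s := Set.Ioi (0:ℝ)))
    simpa using this
  · filter_upwards [self_mem_nhdsWithin] with a ha
    exact mul_pos hσ (Real.sqrt_pos.2 ha)

lemma tendsto_ratio_top (σ c d : ℝ) (hσ : 0 < σ) (hc : 0 < c) :
    Tendsto (fun u : ℝ => (c + d * u) / (σ * Real.sqrt u)) (𝓝[>] 0) atTop := by
  have h1 : Tendsto (fun u : ℝ => c + d * u) (𝓝[>] 0) (𝓝 c) := by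
    have h : ContinuousAt (fun u : ℝ => c + d * u) 0 := by fun_prop
    have := h.tendsto.mono_left (nhdsWithin_le_nhds (s := Set.Ioi (0:ℝ)))
    simpa using this
  have := h1.pos_mul_atTop hc (tendsto_ratio_aux σ hσ)
  simpa [div_eq_mul_inv] using this

lemma tendsto_ratio_bot (σ c d : ℝ) (hσ : 0 < σ) (hc : c < 0) :
    Tendsto (fun u : ℝ => (c + d * u) / (σ * Real.sqrt u)) (𝓝[>] 0) atBot := by
  have h1 : Tendsto (fun u : ℝ => c + d * u) (𝓝[>] 0) (𝓝 c) := by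
    have h : ContinuousAt (fun u : ℝ => c + d * u) 0 := by fun_prop
    have := h.tendsto.mono_left (nhdsWithin_le_nhds (s := Set.Ioi (0:ℝ)))
    simpa using this
  have := h1.neg_mul_atTop hc (tendsto_ratio_aux σ hσ)
  simpa [div_eq_mul_inv] using this

/-- Let `m ∈ ℝ`, `σ > 0`, `r > 0`, `x > 0`, `S > 0` and set `q := √(m² + 2rσ²)`. Then
`∫_0^S e^{−ru}·(1 − π(u,x)) du = (1/r)·[1 − e^{−rS}·(1 − π(S,x))]
 − (1/r)·[exp(−x(m+q)/σ²)·(1 − Φ((x − qS)/(σ√S))) + exp(−x(m−q)/σ²)·(1 − Φ((x + qS)/(σ√S)))]`. -/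
theorem stmt_5 (m σ r x S : ℝ) (hσ : 0 < σ) (hr : 0 < r) (hx : 0 < x) (hS : 0 < S)
    (q : ℝ) (hq : q = Real.sqrt (m ^ 2 + 2 * r * σ ^ 2)) :
    (∫ u in (0:ℝ)..S, Real.exp (-r * u) * (1 - piF m σ u x))
      = (1 / r) * (1 - Real.exp (-r * S) * (1 - piF m σ S x))
        - (1 / r) *
          (Real.exp (-x * (m + q) / σ ^ 2) * (1 - Phi ((x - q * S) / (σ * Real.sqrt S)))
            + Real.exp (-x * (m - q) / σ ^ 2) * (1 - Phi ((x + q * S) / (σ * Real.sqrt S)))) := by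
  have hq2 : q ^ 2 = m ^ 2 + 2 * r * σ ^ 2 := by
    rw [hq]; exact Real.sq_sqrt (by positivity)
  set H : ℝ → ℝ := fun u => (1 / r) * (1 - Real.exp (-r * u) * (1 - piF m σ u x))
    - (1 / r) *
      (Real.exp (-x * (m + q) / σ ^ 2) * (1 - Phi ((x - q * u) / (σ * Real.sqrt u)))
        + Real.exp (-x * (m - q) / σ ^ 2) * (1 - Phi ((x + q * u) / (σ * Real.sqrt u)))) with hH
  have hderiv : ∀ u ∈ Ioo (0:ℝ) S, HasDerivAt H (Real.exp (-r * u) * (1 - piF m σ u x)) u :=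
    fun u hu => H_hasDerivAt m σ r x q hσ hr hq2 hu.1
  -- integrability
  have hint : IntervalIntegrable (fun u => Real.exp (-r * u) * (1 - piF m σ u x)) volume 0 S := by
    rw [intervalIntegrable_iff, uIoc_of_le hS.le]
    apply Integrable.mono' (integrable_const (1 + Real.exp (-2 * m * x / σ ^ 2)))
    · apply Measurable.aestronglyMeasurable
      apply Measurable.mul
      · fun_prop
      · apply Measurable.sub measurable_const
        simp only [piF]
        apply Measurable.add
        · apply Measurable.sub measurable_const
          exact Phi_continuous.measurable.comp
            ((measurable_const.add (measurable_id.const_mul m)).div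
              ((Real.continuous_sqrt.measurable).const_mul σ))
        · apply Measurable.const_mul
          exact Phi_continuous.measurable.comp
            ((measurable_const.add (measurable_id.const_mul m)).div
              ((Real.continuous_sqrt.measurable).const_mul σ))
    · filter_upwards [ae_restrict_mem measurableSet_Ioc] with u hu
      have h1 : Real.exp (-r * u) ≤ 1 := by
        rw [Real.exp_le_one_iff]
        nlinarith [hu.1]
      have hc0 : 0 < Real.exp (-2 * m * x / σ ^ 2) := Real.exp_pos _
      have h2 : |1 - piF m σ u x| ≤ 1 + Real.exp (-2 * m * x / σ ^ 2) := by
        simp only [piF]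
        have p1 := Phi_nonneg ((x + m * u) / (σ * Real.sqrt u))
        have p2 := Phi_le_one ((x + m * u) / (σ * Real.sqrt u))
        have p3 := Phi_nonneg ((-x + m * u) / (σ * Real.sqrt u))
        have p4 := Phi_le_one ((-x + m * u) / (σ * Real.sqrt u))
        rw [abs_le]
        constructor <;> nlinarith
      rw [norm_mul, Real.norm_eq_abs, Real.norm_eq_abs, abs_of_pos (Real.exp_pos _)]
      calc Real.exp (-r * u) * |1 - piF m σ u x|
          ≤ 1 * (1 + Real.exp (-2 * m * x / σ ^ 2)) := by
            apply mul_le_mul h1 h2 (abs_nonneg _) zero_le_one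
        _ = 1 + Real.exp (-2 * m * x / σ ^ 2) := one_mul _
  -- tendsto at 0+
  have h0 : Tendsto H (𝓝[>] (0:ℝ)) (𝓝 0) := by
    have hE0 : Tendsto (fun u : ℝ => Real.exp (-r * u)) (𝓝[>] (0:ℝ)) (𝓝 1) := by
      have h : ContinuousAt (fun u : ℝ => Real.exp (-r * u)) 0 := by fun_prop
      have := h.tendsto.mono_left (nhdsWithin_le_nhds (s := Set.Ioi (0:ℝ)))
      simpa using this
    have hA0 : Tendsto (fun u : ℝ => Phi ((x + m * u) / (σ * Real.sqrt u)))
        (𝓝[>] (0:ℝ)) (𝓝 1) := Phi_tendsto_atTop.comp (tendsto_ratio_top σ x m hσ hx)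
    have hB0 : Tendsto (fun u : ℝ => Phi ((-x + m * u) / (σ * Real.sqrt u)))
        (𝓝[>] (0:ℝ)) (𝓝 0) :=
      Phi_tendsto_atBot.comp (tendsto_ratio_bot σ (-x) m hσ (by linarith))
    have hα0 : Tendsto (fun u : ℝ => Phi ((x - q * u) / (σ * Real.sqrt u)))
        (𝓝[>] (0:ℝ)) (𝓝 1) := by
      have := Phi_tendsto_atTop.comp (tendsto_ratio_top σ x (-q) hσ hx)
      simpa [Function.comp_def, sub_eq_add_neg]
        using this
    have hβ0 : Tendsto (fun u : ℝ => Phi ((x + q * u) / (σ * Real.sqrt u)))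
        (𝓝[>] (0:ℝ)) (𝓝 1) := Phi_tendsto_atTop.comp (tendsto_ratio_top σ x q hσ hx)
    have hpi0 : Tendsto (fun u : ℝ => piF m σ u x) (𝓝[>] (0:ℝ)) (𝓝 0) := by
      simp only [piF]
      have := ((tendsto_const_nhds (x := (1:ℝ))).sub hA0).add
        (hB0.const_mul (Real.exp (-2 * m * x / σ ^ 2)))
      convert this using 2
      norm_num
    have htot := (((tendsto_const_nhds (x := (1:ℝ))).sub
        (hE0.mul ((tendsto_const_nhds (x := (1:ℝ))).sub hpi0))).const_mul
        (1 / r)).sub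
      (((((tendsto_const_nhds (x := (1:ℝ))).sub hα0).const_mul (Real.exp (-x * (m + q) / σ ^ 2))).add
        (((tendsto_const_nhds (x := (1:ℝ))).sub hβ0).const_mul (Real.exp (-x * (m - q) / σ ^ 2)))).const_mul
        (1 / r))
    rw [hH]
    convert htot using 2
    norm_num
  -- tendsto at S-
  have hS' : Tendsto H (𝓝[<] S) (𝓝 (H S)) :=
    ((H_hasDerivAt m σ r x q hσ hr hq2 hS).continuousAt).continuousWithinAt
  have hmain := intervalIntegral.integral_eq_sub_of_hasDerivAt_of_tendsto hS hderiv hint h0 hS'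
  rw [hmain, hH]
  ring
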